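/- A closed connected Riemannian manifold M admits a minimal geodesic if and only if its fundamental group π₁(M) is infinite. Equivalently, the universal Riemannian covering M̃ of a closed connected Riemannian manifold contains a geodesic line (an isometric embedding of ℝ) if and only if M̃ has infinite diameter, which holds iff π₁(M) is infinite. -/

import Mathlib

/-- Existence of minimal geodesics and the fundamental group, in metric form: let `X`
be a nonempty proper geodesic metric space (the universal Riemannian covering `M̃` of a
closed connected Riemannian manifold) on which a group `G` (the fundamental group
`π₁(M)`, i.e. the deck transformation group) acts isometrically, properly
discontinuously and cocompactly. Then `X` contains a geodesic line (an isometric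
embedding of `ℝ`, i.e. a minimal geodesic) if and only if `G` is infinite, and `X` has
infinite diameter if and only if `G` is infinite. -/
theorem exists_line_iff_infinite_deck_group {X : Type*} [MetricSpace X] [ProperSpace X]
    [Nonempty X]
    (hgeo : ∀ x y : X, ∃ γ : ℝ → X, γ 0 = x ∧ γ (dist x y) = y ∧
      ∀ s ∈ Set.Icc (0 : ℝ) (dist x y), ∀ t ∈ Set.Icc (0 : ℝ) (dist x y),
        dist (γ s) (γ t) = |s - t|)
    (G : Type*) [Group G] [MulAction G X] [IsIsometricSMul G X]
    [ProperlyDiscontinuousSMul G X]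
    (hcocompact : ∃ K : Set X, IsCompact K ∧ ∀ x : X, ∃ g : G, g • x ∈ K) :
    ((∃ γ : ℝ → X, Isometry γ) ↔ Infinite G) ∧
    (EMetric.diam (Set.univ : Set X) = ⊤ ↔ Infinite G) := by
  obtain ⟨K, hK, hKcov⟩ := hcocompact
  obtain ⟨x₀⟩ := ‹Nonempty X›
  -- (1) diam ≠ ⊤ → Finite G  (proper discontinuity on compact X)
  have hfin : EMetric.diam (Set.univ : Set X) ≠ ⊤ → Finite G := by
    intro hd
    have hb : Bornology.IsBounded (Set.univ : Set X) :=
      Metric.isBounded_iff_ediam_ne_top.2 hd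
    have hcx : IsCompact (Set.univ : Set X) :=
      Metric.isCompact_of_isClosed_isBounded isClosed_univ hb
    have hfin' := ProperlyDiscontinuousSMul.finite_disjoint_inter_image
      (Γ := G) (T := X) hcx hcx
    have hall : {g : G | (fun x : X => g • x) '' Set.univ ∩ Set.univ ≠ ∅} = Set.univ := by
      ext g
      simp only [Set.mem_setOf_eq, Set.mem_univ, iff_true]
      intro h
      have : g • x₀ ∈ (fun x : X => g • x) '' Set.univ ∩ Set.univ :=
        ⟨⟨x₀, trivial, rfl⟩, trivial⟩
      rw [h] at this
      exact this
    simp only [Set.nonempty_iff_ne_empty] at hfin'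
    rw [hall] at hfin'
    exact Set.finite_univ_iff.mp hfin'
  -- (2) Infinite G → diam = ⊤  (contrapositive: finite G gives compact X via cocompactness)
  have hCB : Infinite G → EMetric.diam (Set.univ : Set X) = ⊤ := by
    intro hG
    by_contra hd
    exact not_infinite_iff_finite.2 (hfin hd) hG
  -- (3) line → diam = ⊤
  have hAB : (∃ γ : ℝ → X, Isometry γ) → EMetric.diam (Set.univ : Set X) = ⊤ := by
    rintro ⟨γ, hγ⟩
    apply ENNReal.eq_top_of_forall_nnreal_le
    intro r
    have h1 : edist (γ 0) (γ (r : ℝ)) = (r : ENNReal) := by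
      rw [hγ.edist_eq, edist_dist, Real.dist_eq]
      simp [abs_of_nonneg r.coe_nonneg]
    calc (r : ENNReal) = edist (γ 0) (γ (r : ℝ)) := h1.symm
      _ ≤ EMetric.diam (Set.univ : Set X) :=
          EMetric.edist_le_diam_of_mem trivial trivial
  -- (4) diam = ⊤ → line exists
  have hBA : EMetric.diam (Set.univ : Set X) = ⊤ → ∃ γ : ℝ → X, Isometry γ := by
    intro hd
    obtain ⟨R, hR⟩ := hK.isBounded.subset_closedBall x₀
    have hfar : ∀ n : ℕ, ∃ pq : X × X, (2 * n : ℝ) ≤ dist pq.1 pq.2 := by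
      intro n
      by_contra h
      push_neg at h
      have hle : EMetric.diam (Set.univ : Set X) ≤ ENNReal.ofReal (2 * n) := by
        refine EMetric.diam_le fun x _ y _ => ?_
        rw [edist_dist]
        exact ENNReal.ofReal_le_ofReal (h (x, y)).le
      rw [hd] at hle
      exact (ENNReal.ofReal_ne_top) (top_le_iff.mp hle)
    choose pq hpq using hfar
    set L : ℕ → ℝ := fun n => dist (pq n).1 (pq n).2 with hLdef
    have hL0 : ∀ n, 0 ≤ L n := fun n => dist_nonneg
    have hLn : ∀ n : ℕ, 2 * (n : ℝ) ≤ L n := hpq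
    choose γ hγ0 hγL hγd using fun n => hgeo (pq n).1 (pq n).2
    choose g hg using fun n => hKcov (γ n (L n / 2))
    set c : ℕ → ℝ → ℝ := fun n t => max 0 (min (t + L n / 2) (L n)) with hc
    set δ : ℕ → ℝ → X := fun n t => g n • γ n (c n t) with hδ
    have hcmem : ∀ n t, c n t ∈ Set.Icc (0 : ℝ) (L n) := fun n t =>
      ⟨le_max_left _ _, max_le (hL0 n) (min_le_right _ _)⟩
    have hdist : ∀ n s t, dist (δ n s) (δ n t) = |c n s - c n t| := by
      intro n s t
      simp only [hδ]
      rw [dist_smul]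
      exact hγd n _ (hcmem n s) _ (hcmem n t)
    have hc0 : ∀ n, c n 0 = L n / 2 := by
      intro n
      have h1 : (0 : ℝ) + L n / 2 = L n / 2 := by ring
      rw [hc]
      simp only [h1]
      rw [min_eq_left (by linarith [hL0 n]), max_eq_right (by linarith [hL0 n])]
    have hmid : ∀ n, δ n 0 ∈ K := by
      intro n
      simp only [hδ, hc0]
      exact hg n
    -- clamp distance bound
    have key : ∀ n (t : ℝ), |c n t - L n / 2| ≤ |t| := by
      intro n t
      have h1 := le_abs_self t
      have h2 := neg_abs_le t
      have hl := hL0 n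
      simp only [hc]
      rcases le_total (t + L n / 2) 0 with h | h
      · rw [min_eq_left (by linarith), max_eq_left (by linarith), abs_le]
        constructor <;> linarith
      · rcases le_total (t + L n / 2) (L n) with h' | h'
        · rw [min_eq_left h', max_eq_right h, abs_le]
          constructor <;> linarith
        · rw [min_eq_right h', max_eq_right hl, abs_le]
          constructor <;> linarith
    have hball : ∀ (t : ℝ) n, δ n t ∈ Metric.closedBall x₀ (R + |t|) := by
      intro t n
      have h1 : dist (δ n t) (δ n 0) ≤ |t| := by
        rw [hdist, hc0]
        exact key n t
      have h2 : dist (δ n 0) x₀ ≤ R := hR (hmid n)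
      have := dist_triangle (δ n t) (δ n 0) x₀
      simp only [Metric.mem_closedBall]
      linarith
    -- for large n the distances are exact
    have hexact : ∀ (s t : ℝ) (n : ℕ), |s| ≤ (n : ℝ) → |t| ≤ (n : ℝ) →
        dist (δ n s) (δ n t) = |s - t| := by
      intro s t n hs ht
      have hln := hLn n
      have hcs : ∀ u : ℝ, |u| ≤ (n : ℝ) → c n u = u + L n / 2 := by
        intro u hu
        have h1 := le_abs_self u
        have h2 := neg_abs_le u
        simp only [hc]
        rw [min_eq_left (by linarith), max_eq_right (by linarith)]
      rw [hdist, hcs s hs, hcs t ht]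
      congr 1
      ring
    -- ultrafilter limit
    let U : Ultrafilter ℕ := Filter.hyperfilter ℕ
    have hUle : (U : Filter ℕ) ≤ Filter.atTop :=
      Nat.cofinite_eq_atTop ▸ Filter.hyperfilter_le_cofinite
    have hlim : ∀ t : ℝ, ∃ a, Filter.Tendsto (fun n => δ n t) U (nhds a) := by
      intro t
      obtain ⟨a, -, ha⟩ := (isCompact_closedBall x₀ (R + |t|)).ultrafilter_le_nhds
        (U.map (fun n => δ n t))
        (Filter.le_principal_iff.2 (Filter.mem_map.2 (Filter.univ_mem'
          fun n => hball t n)))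
      exact ⟨a, ha⟩
    refine ⟨fun t => (hlim t).choose, Isometry.of_dist_eq fun s t => ?_⟩
    have hs := (hlim s).choose_spec
    have ht := (hlim t).choose_spec
    have h1 : Filter.Tendsto (fun n => dist (δ n s) (δ n t)) U
        (nhds (dist ((hlim s).choose) ((hlim t).choose))) := hs.dist ht
    have h2 : ∀ᶠ n in (U : Filter ℕ), dist (δ n s) (δ n t) = |s - t| := by
      apply Filter.Eventually.filter_mono hUle
      obtain ⟨N, hN⟩ := exists_nat_ge (max |s| |t|)
      filter_upwards [Filter.eventually_ge_atTop N] with n hn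
      have hnn : (N : ℝ) ≤ (n : ℝ) := by exact_mod_cast hn
      exact hexact s t n (le_trans (le_trans (le_max_left _ _) hN) hnn)
        (le_trans (le_trans (le_max_right _ _) hN) hnn)
    have h3 : Filter.Tendsto (fun n => dist (δ n s) (δ n t)) U (nhds |s - t|) :=
      Filter.Tendsto.congr' (Filter.EventuallyEq.symm h2) tendsto_const_nhds
    rw [tendsto_nhds_unique h1 h3, Real.dist_eq]
  -- assemble
  have hBC : EMetric.diam (Set.univ : Set X) = ⊤ → Infinite G := by
    intro hd
    by_contra hG
    rw [not_infinite_iff_finite] at hG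
    -- finite G + cocompact K gives X compact, hence bounded, contradicting hd
    have hcov : (Set.univ : Set X) ⊆ ⋃ g : G, (fun x => g⁻¹ • x) '' K := by
      intro x _
      obtain ⟨g, hg⟩ := hKcov x
      exact Set.mem_iUnion.2 ⟨g, ⟨g • x, hg, by simp⟩⟩
    have hcomp : IsCompact (⋃ g : G, (fun x => g⁻¹ • x) '' K) :=
      isCompact_iUnion fun g => hK.image (isometry_smul X g⁻¹).continuous
    have hb : Bornology.IsBounded (Set.univ : Set X) := hcomp.isBounded.subset hcov
    exact (Metric.isBounded_iff_ediam_ne_top.1 hb) hd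
  exact ⟨⟨fun a => hBC (hAB a), fun hG => hBA (hCB hG)⟩, ⟨hBC, hCB⟩⟩
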